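/- Let {k_j} be a sequence of positive integers with exp(i·k_j) → 1 as j → ∞ (hence k_j → ∞). Then the functions g_j(z) := exp(exp(iπ/2 + z/k_j + log k_j)) = exp(i·k_j·exp(z/k_j)) converge uniformly on every compact subset of ℂ to the function g(z) = exp(i z). -/

import Mathlib

open Filter Topology

lemma aux_exp_ne_one (m : ℕ) (hm : 0 < m) : Complex.exp (Complex.I * m) ≠ 1 := by
  intro h
  rw [Complex.exp_eq_one_iff] at h
  obtain ⟨n, hn⟩ := h
  have h1 : (m : ℂ) = (n : ℂ) * 2 * Real.pi := by
    apply mul_left_cancel₀ Complex.I_ne_zero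
    linear_combination hn
  have h2 : (m : ℝ) = (n : ℝ) * 2 * Real.pi := by
    exact_mod_cast h1
  have hn0 : n ≠ 0 := by
    rintro rfl
    simp at h2
    omega
  apply irrational_pi
  refine ⟨(m : ℚ) / ((n : ℚ) * 2), ?_⟩
  have hnr : (n : ℝ) ≠ 0 := Int.cast_ne_zero.mpr hn0
  push_cast
  field_simp at h2 ⊢
  linarith

lemma aux_tendsto (k : ℕ → ℕ) (hk : ∀ j, 0 < k j)
    (hlim : Tendsto (fun j => Complex.exp (Complex.I * (k j : ℂ))) atTop (𝓝 1)) :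
    Tendsto (fun j => ((k j : ℕ) : ℝ)) atTop atTop := by
  have hK : Tendsto k atTop atTop := by
    rw [tendsto_atTop]
    intro N
    by_cases hN : (Finset.Ioo 0 N).Nonempty
    · obtain ⟨m₀, hm₀, hmin⟩ := Finset.exists_min_image (Finset.Ioo 0 N)
        (fun m => ‖Complex.exp (Complex.I * m) - 1‖) hN
      set ε := ‖Complex.exp (Complex.I * m₀) - 1‖ with hε_def
      have hε : 0 < ε := by
        rw [hε_def, norm_pos_iff, sub_ne_zero]
        exact aux_exp_ne_one m₀ (Finset.mem_Ioo.mp hm₀).1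
      have hev := (Metric.tendsto_nhds.mp hlim) ε hε
      filter_upwards [hev] with j hj
      by_contra hlt
      push_neg at hlt
      have hmem : k j ∈ Finset.Ioo 0 N := Finset.mem_Ioo.mpr ⟨hk j, hlt⟩
      have := hmin (k j) hmem
      rw [dist_eq_norm] at hj
      linarith
    · have hN1 : N ≤ 1 := by
        by_contra h
        exact hN ⟨1, Finset.mem_Ioo.mpr ⟨one_pos, by omega⟩⟩
      filter_upwards with j
      have := hk j
      omega
  exact tendsto_natCast_atTop_atTop.comp hK

/-- **An explicit sequence converging to the Brody curve `z ↦ exp (i z)` in `ℂ*`.**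
If `k j` are positive integers with `exp (i k j) → 1`, then the entire nowhere-vanishing
functions `g j (z) = exp (exp (iπ/2 + z/k j + log (k j))) = exp (i k j exp (z / k j))`
converge uniformly on every compact subset of `ℂ` to `z ↦ exp (i z)`. -/
theorem stmt17 (k : ℕ → ℕ) (hk : ∀ j, 0 < k j)
    (hlim : Tendsto (fun j => Complex.exp (Complex.I * (k j : ℂ))) atTop (𝓝 1)) :
    ∀ K : Set ℂ, IsCompact K →
      TendstoUniformlyOn
        (fun j z => Complex.exp (Complex.exp
          (Complex.I * (Real.pi : ℂ) / 2 + z / (k j : ℂ) + (Real.log (k j) : ℂ))))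
        (fun z => Complex.exp (Complex.I * z)) atTop K := by
  intro K hKc
  obtain ⟨R₀, hR₀⟩ := hKc.isBounded.subset_closedBall 0
  set R : ℝ := max R₀ 1 with hR_def
  have hR1 : 1 ≤ R := le_max_right _ _
  have hRK : ∀ z ∈ K, ‖z‖ ≤ R := by
    intro z hz
    have := hR₀ hz
    simp only [Metric.mem_closedBall, dist_zero_right] at this
    exact this.trans (le_max_left _ _)
  set M : ℝ := Real.exp R with hM_def
  have hM : 0 < M := Real.exp_pos R
  rw [Metric.tendstoUniformlyOn_iff]
  intro ε hε
  have htend := aux_tendsto k hk hlim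
  have h1 : ∀ᶠ j in atTop, R ≤ ((k j : ℕ) : ℝ) := htend.eventually_ge_atTop R
  have h1' : ∀ᶠ j in atTop, R ^ 2 ≤ ((k j : ℕ) : ℝ) := htend.eventually_ge_atTop (R ^ 2)
  have h2 : ∀ᶠ j in atTop, 4 * M * R ^ 2 / ε < ((k j : ℕ) : ℝ) :=
    htend.eventually_gt_atTop _
  have h3 : ∀ᶠ j in atTop, dist (Complex.exp (Complex.I * (k j : ℂ))) 1 < ε / (2 * M) :=
    (Metric.tendsto_nhds.mp hlim) _ (by positivity)
  filter_upwards [h1, h1', h2, h3] with j hj1 hj1' hj2 hj3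
  intro z hz
  set kr : ℝ := ((k j : ℕ) : ℝ) with hkr_def
  have hkr0 : 0 < kr := lt_of_lt_of_le zero_lt_one (hR1.trans hj1)
  have hkC : ((k j : ℕ) : ℂ) ≠ 0 := Nat.cast_ne_zero.mpr (hk j).ne'
  have hzR : ‖z‖ ≤ R := hRK z hz
  set d : ℂ := Complex.I * (k j : ℂ) * (Complex.exp (z / (k j : ℂ)) - 1 - z / (k j : ℂ))
    with hd_def
  -- Identity: the inner exponential equals I * k * exp(z/k)
  have hinner : Complex.exp (Complex.I * (Real.pi : ℂ) / 2 + z / (k j : ℂ)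
      + (Real.log (k j) : ℂ)) = Complex.I * (k j : ℂ) * Complex.exp (z / (k j : ℂ)) := by
    rw [Complex.exp_add, Complex.exp_add]
    have e1 : Complex.I * (Real.pi : ℂ) / 2 = ((Real.pi / 2 : ℝ) : ℂ) * Complex.I := by
      push_cast; ring
    have e2 : Complex.exp (Complex.I * (Real.pi : ℂ) / 2) = Complex.I := by
      rw [e1, Complex.exp_mul_I, ← Complex.ofReal_cos, ← Complex.ofReal_sin,
        Real.cos_pi_div_two, Real.sin_pi_div_two]
      simp
    have e3 : Complex.exp ((Real.log (k j) : ℂ)) = ((k j : ℕ) : ℂ) := by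
      rw [← Complex.ofReal_exp, Real.exp_log hkr0, hkr_def]
      norm_cast
    rw [e2, e3]; ring
  -- Decomposition
  have hdecomp : Complex.I * (k j : ℂ) * Complex.exp (z / (k j : ℂ))
      = Complex.I * (k j : ℂ) + Complex.I * z + d := by
    rw [hd_def]
    field_simp
    ring
  have hg : Complex.exp (Complex.exp (Complex.I * (Real.pi : ℂ) / 2 + z / (k j : ℂ)
      + (Real.log (k j) : ℂ)))
      = Complex.exp (Complex.I * (k j : ℂ)) * Complex.exp (Complex.I * z) * Complex.exp d := by
    rw [hinner, hdecomp, Complex.exp_add, Complex.exp_add]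
  -- Norm estimates
  have hnz : ‖Complex.exp (Complex.I * z)‖ ≤ M := by
    rw [Complex.norm_exp]
    apply Real.exp_le_exp.mpr
    have : (Complex.I * z).re = -z.im := by simp
    rw [this]
    calc -z.im ≤ |z.im| := neg_le_abs _
      _ ≤ ‖z‖ := by exact Complex.abs_im_le_norm z
      _ ≤ R := hzR
  have hnk : ‖Complex.exp (Complex.I * (k j : ℂ))‖ = 1 := by
    rw [Complex.norm_exp]
    have : (Complex.I * (k j : ℂ)).re = 0 := by simp
    rw [this, Real.exp_zero]
  have hzk1 : ‖z / (k j : ℂ)‖ ≤ 1 := by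
    rw [norm_div]
    have : ‖((k j : ℕ) : ℂ)‖ = kr := by
      rw [hkr_def]; exact Complex.norm_natCast _
    rw [this]
    rw [div_le_one hkr0]
    calc ‖z‖ = ‖z‖ := rfl
      _ ≤ R := hzR
      _ ≤ kr := hj1
  have hd_bound : ‖d‖ ≤ R ^ 2 / kr := by
    rw [hd_def]
    rw [norm_mul, norm_mul, Complex.norm_I, one_mul]
    have hknorm : ‖((k j : ℕ) : ℂ)‖ = kr := Complex.norm_natCast _
    rw [hknorm]
    have hbound := Complex.norm_exp_sub_one_sub_id_le hzk1
    have hzk : ‖z / (k j : ℂ)‖ ≤ R / kr := by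
      rw [norm_div, Complex.norm_natCast]
      gcongr
    calc kr * ‖Complex.exp (z / (k j : ℂ)) - 1 - z / (k j : ℂ)‖
        ≤ kr * (‖z / (k j : ℂ)‖) ^ 2 := by
          exact mul_le_mul_of_nonneg_left hbound hkr0.le
      _ ≤ kr * (R / kr) ^ 2 := by
          apply mul_le_mul_of_nonneg_left _ hkr0.le
          exact pow_le_pow_left₀ (norm_nonneg _) hzk 2
      _ = R ^ 2 / kr := by field_simp
  have hd1 : ‖d‖ ≤ 1 := by
    apply hd_bound.trans
    rw [div_le_one hkr0]
    exact hj1'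
  have hexpd : ‖Complex.exp d - 1‖ ≤ 2 * (R ^ 2 / kr) := by
    have := Complex.norm_exp_sub_one_le (x := d) hd1
    calc ‖Complex.exp d - 1‖ ≤ 2 * ‖d‖ := this
      _ = 2 * ‖d‖ := rfl
      _ ≤ 2 * (R ^ 2 / kr) := by linarith
  -- final estimate
  rw [hg, dist_eq_norm]
  have key : Complex.exp (Complex.I * z)
      - Complex.exp (Complex.I * (k j : ℂ)) * Complex.exp (Complex.I * z) * Complex.exp d
      = Complex.exp (Complex.I * z) * ((1 - Complex.exp (Complex.I * (k j : ℂ)))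
        + Complex.exp (Complex.I * (k j : ℂ)) * (1 - Complex.exp d)) := by ring
  rw [key, norm_mul]
  have hk1 : ‖1 - Complex.exp (Complex.I * (k j : ℂ))‖ < ε / (2 * M) := by
    rw [norm_sub_rev, ← dist_eq_norm]; exact hj3
  have hk2 : ‖Complex.exp (Complex.I * (k j : ℂ)) * (1 - Complex.exp d)‖ ≤ 2 * (R ^ 2 / kr) := by
    rw [norm_mul, hnk, one_mul, norm_sub_rev]
    exact hexpd
  have hsum : ‖(1 - Complex.exp (Complex.I * (k j : ℂ)))
      + Complex.exp (Complex.I * (k j : ℂ)) * (1 - Complex.exp d)‖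
      < ε / (2 * M) + 2 * (R ^ 2 / kr) := by
    calc _ ≤ ‖1 - Complex.exp (Complex.I * (k j : ℂ))‖
        + ‖Complex.exp (Complex.I * (k j : ℂ)) * (1 - Complex.exp d)‖ := norm_add_le _ _
      _ < ε / (2 * M) + 2 * (R ^ 2 / kr) := by linarith
  have hfin : M * (ε / (2 * M) + 2 * (R ^ 2 / kr)) < ε := by
    have e1 : 4 * M * R ^ 2 < kr * ε := (div_lt_iff₀ hε).mp hj2
    have e2 : M * (ε / (2 * M)) = ε / 2 := by
      field_simp
    have e3 : M * (2 * (R ^ 2 / kr)) < ε / 2 := by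
      rw [show M * (2 * (R ^ 2 / kr)) = 2 * M * R ^ 2 / kr by field_simp]
      rw [div_lt_iff₀ hkr0]
      nlinarith
    calc M * (ε / (2 * M) + 2 * (R ^ 2 / kr))
        = M * (ε / (2 * M)) + M * (2 * (R ^ 2 / kr)) := by ring
      _ < ε / 2 + ε / 2 := by rw [e2]; linarith
      _ = ε := by ring
  calc ‖Complex.exp (Complex.I * z)‖ * ‖(1 - Complex.exp (Complex.I * (k j : ℂ)))
      + Complex.exp (Complex.I * (k j : ℂ)) * (1 - Complex.exp d)‖
      ≤ M * ‖(1 - Complex.exp (Complex.I * (k j : ℂ)))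
        + Complex.exp (Complex.I * (k j : ℂ)) * (1 - Complex.exp d)‖ :=
        mul_le_mul_of_nonneg_right hnz (norm_nonneg _)
    _ ≤ M * (ε / (2 * M) + 2 * (R ^ 2 / kr)) := by
        apply mul_le_mul_of_nonneg_left hsum.le hM.le
    _ < ε := hfin
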